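/- Let L be a width-w decision list of size m on n variables in which every index is useful. Then for any i ∈ [m] and β ∈ (0,1): p_L(i) ≤ q_L(1-β, i)^{(1+β)/(2β)}. -/

import Mathlib

open Finset
open scoped Classical BigOperators

noncomputable section

/-- A term over `n` Boolean variables, given as a partial assignment:
`C i = some b` means the literal `x i = b` appears in the term. -/
abbrev Term (n : ℕ) := Fin n → Option Bool

/-- Satisfaction of a term by an assignment. -/
def TermSat {n : ℕ} (C : Term n) (x : Fin n → Bool) : Prop :=
  ∀ i b, C i = some b → x i = b

/-- Width of a term: the number of variables it mentions. -/
def termWidth {n : ℕ} (C : Term n) : ℕ :=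
  (Finset.univ.filter fun i => C i ≠ none).card

/-- The index function of a decision list with terms `C`:
the first index whose term is satisfied by `x` (and `m` conventionally if none,
since `sInf ∅ = 0`; the default rule hypothesis makes the set nonempty). -/
def DLind {n m : ℕ} (C : Fin m → Term n) (x : Fin n → Bool) : ℕ :=
  sInf {i : ℕ | ∃ h : i < m, TermSat (C ⟨i, h⟩) x}

/-- Evaluation of a decision list with terms `C` and values `v`. -/
def DLeval {n m : ℕ} {V : Type} [Inhabited V] (C : Fin m → Term n)
    (v : Fin m → V) (x : Fin n → Bool) : V :=
  if h : DLind C x < m then v ⟨DLind C x, h⟩ else default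

/-- Probability of an event under the uniform distribution on `{0,1}^n`. -/
def pr (n : ℕ) (P : (Fin n → Bool) → Prop) : ℝ :=
  ((Finset.univ.filter P).card : ℝ) / 2 ^ n

/-- Hit probability of index `i` in the decision list with terms `C`. -/
def pL {n m : ℕ} (C : Fin m → Term n) (i : ℕ) : ℝ :=
  pr n fun x => DLind C x = i

/-- The index function of the sub-decision-list `L|_J`. -/
def DLindSub {n m : ℕ} (C : Fin m → Term n) (J : Finset (Fin m)) (x : Fin n → Bool) : ℕ :=
  sInf {i : ℕ | ∃ h : i < m, (⟨i, h⟩ : Fin m) ∈ J ∧ TermSat (C ⟨i, h⟩) x}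

/-- Evaluation of the sub-decision-list `L|_J`. -/
def DLevalSub {n m : ℕ} {V : Type} [Inhabited V] (C : Fin m → Term n) (v : Fin m → V)
    (J : Finset (Fin m)) (x : Fin n → Bool) : V :=
  if h : DLindSub C J x < m then v ⟨DLindSub C J x, h⟩ else default

/-- A restriction: `some b` fixes a coordinate to `b`, `none` is a star. -/
abbrev Restriction (n : ℕ) := Fin n → Option Bool

/-- `x` is a completion of the restriction `ρ`. -/
def Compatible {n : ℕ} (ρ : Restriction n) (x : Fin n → Bool) : Prop :=
  ∀ i b, ρ i = some b → x i = b

/-- Number of stars of a restriction. -/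
def stars {n : ℕ} (ρ : Restriction n) : ℕ :=
  (Finset.univ.filter fun i => ρ i = none).card

/-- Weight of a restriction under the product distribution `U(n, α)`:
each coordinate independently `*` with probability `α`, and `0` or `1`
each with probability `(1-α)/2`. -/
def restW {n : ℕ} (α : ℝ) (ρ : Restriction n) : ℝ :=
  ∏ i : Fin n, if ρ i = none then α else (1 - α) / 2

/-- Index `i` is useful in the restricted decision list `L↾ρ`: some completion
of `ρ` hits rule `i`. -/
def Useful {n m : ℕ} (C : Fin m → Term n) (ρ : Restriction n) (i : Fin m) : Prop :=
  ∃ x, Compatible ρ x ∧ DLind C x = i.val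

/-- Number of useful indices of `L↾ρ`. -/
def useNum {n m : ℕ} (C : Fin m → Term n) (ρ : Restriction n) : ℕ :=
  (Finset.univ.filter fun i : Fin m => Useful C ρ i).card

/-- `q_L(α, i)`: probability over `ρ ~ U(n, α)` that index `i` is useful in `L↾ρ`. -/
def qL {n m : ℕ} (C : Fin m → Term n) (α : ℝ) (i : Fin m) : ℝ :=
  ∑ ρ : Restriction n, restW α ρ * (if Useful C ρ i then 1 else 0)

/-- Transition weight of the `β`-noise on a single bit. -/
def noiseW (β : ℝ) (a b : Bool) : ℝ := if a = b then (1 + β) / 2 else (1 - β) / 2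

/-- Joint density of `(x, y)` where `x` is uniform and `y ~ N_β(x)`. -/
def pairW {n : ℕ} (β : ℝ) (x y : Fin n → Bool) : ℝ :=
  (1 / 2) ^ n * ∏ i : Fin n, noiseW β (x i) (y i)

/-- `Stab_L(β, i) = Pr[Ind L(x) = Ind L(y) = i]` for `x` uniform, `y ~ N_β(x)`. -/
def StabInd {n m : ℕ} (C : Fin m → Term n) (β : ℝ) (i : Fin m) : ℝ :=
  ∑ x : Fin n → Bool, ∑ y : Fin n → Bool,
    pairW β x y * (if DLind C x = i.val ∧ DLind C y = i.val then 1 else 0)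

/-- `Stab_β(g) = Pr[g(x) = g(y) = 1]` for `x` uniform, `y ~ N_β(x)`. -/
def stab {n : ℕ} (β : ℝ) (g : (Fin n → Bool) → Bool) : ℝ :=
  ∑ x : Fin n → Bool, ∑ y : Fin n → Bool,
    pairW β x y * (if g x = true ∧ g y = true then 1 else 0)

/-- Probability weight that a uniform completion of `ρ` equals `x`. -/
def compW {n : ℕ} (ρ : Restriction n) (x : Fin n → Bool) : ℝ :=
  if Compatible ρ x then (1 / 2) ^ stars ρ else 0

/-- Evaluation of a DNF with terms `T`. -/
def DNFeval {n M : ℕ} (T : Fin M → Term n) (x : Fin n → Bool) : Prop :=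
  ∃ t, TermSat (T t) x


/-! ### Auxiliary development -/

private lemma key_scalar {α p0 p1 : ℝ} (hα0 : 0 ≤ α) (hα1 : α < 1)
    (hp0 : 0 ≤ p0) (hle : p0 ≤ p1) :
    ((p0 + p1) / 2) ^ (2 * (1 - α) / (2 - α)) ≤
      α * p1 ^ (2 * (1 - α) / (2 - α)) +
        (1 - α) / 2 * (p0 ^ (2 * (1 - α) / (2 - α)) + p1 ^ (2 * (1 - α) / (2 - α))) := by
  have h2α : (0:ℝ) < 2 - α := by linarith
  set c : ℝ := 2 * (1 - α) / (2 - α) with hc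
  have hc0 : 0 < c := div_pos (by linarith) h2α
  have hc1 : c ≤ 1 := by
    rw [hc, div_le_one h2α]; linarith
  have hαc : 1 - α ≤ c := by
    rw [hc, le_div_iff₀ h2α]; nlinarith
  have hp1 : 0 ≤ p1 := hp0.trans hle
  rcases eq_or_lt_of_le hp1 with h | hp1pos
  · have hp10 : p1 = 0 := h.symm
    have hp00 : p0 = 0 := le_antisymm (hp10 ▸ hle) hp0
    rw [hp00, hp10]
    rw [show ((0:ℝ)+0)/2 = 0 by ring, Real.zero_rpow hc0.ne']
    norm_num
  · set t : ℝ := p0 / p1 with htdef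
    have ht0 : 0 ≤ t := by positivity
    have ht1 : t ≤ 1 := by rw [htdef, div_le_one hp1pos]; exact hle
    have hmul : p1 * t = p0 := by rw [htdef]; field_simp
    have htc : t ≤ t ^ c := by
      rcases eq_or_lt_of_le ht0 with h0 | h0
      · rw [← h0, Real.zero_rpow hc0.ne']
      · calc t = t ^ (1:ℝ) := (Real.rpow_one t).symm
          _ ≤ t ^ c := Real.rpow_le_rpow_of_exponent_ge h0 ht1 hc1
    have hB : ((1 + t) / 2) ^ c ≤ 1 + c * ((t - 1) / 2) := by
      have := rpow_one_add_le_one_add_mul_self (s := (t - 1) / 2)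
        (by linarith) hc0.le hc1
      have he : (1:ℝ) + (t - 1) / 2 = (1 + t) / 2 := by ring
      rwa [he] at this
    have h3 : 1 + c * ((t - 1) / 2) ≤ α + (1 - α) / 2 * (1 + t ^ c) := by
      nlinarith [mul_le_mul_of_nonneg_left (sub_le_sub_left htc 1) (by linarith : (0:ℝ) ≤ 1 - α),
        mul_le_mul_of_nonneg_right hαc (by linarith : (0:ℝ) ≤ 1 - t)]
    have hsplit : ((p0 + p1) / 2) ^ c = p1 ^ c * ((1 + t) / 2) ^ c := by
      rw [← Real.mul_rpow hp1 (by linarith : (0:ℝ) ≤ (1 + t) / 2)]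
      congr 1
      have h4 : p1 * (1 + t) = p0 + p1 := by rw [mul_add, mul_one, hmul]; ring
      rw [← h4]; ring
    have hp1c : (0:ℝ) ≤ p1 ^ c := Real.rpow_nonneg hp1 c
    calc ((p0 + p1) / 2) ^ c = p1 ^ c * ((1 + t) / 2) ^ c := hsplit
      _ ≤ p1 ^ c * (α + (1 - α) / 2 * (1 + t ^ c)) :=
          mul_le_mul_of_nonneg_left (hB.trans h3) hp1c
      _ = α * p1 ^ c + (1 - α) / 2 * (p1 ^ c * t ^ c + p1 ^ c) := by ring
      _ = α * p1 ^ c + (1 - α) / 2 * (p0 ^ c + p1 ^ c) := by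
          rw [← Real.mul_rpow hp1 ht0, hmul]

private def hitP {n : ℕ} (A : Finset (Fin n → Bool)) (ρ : Restriction n) : Prop :=
  ∃ x ∈ A, Compatible ρ x

private def QQ (n : ℕ) (α : ℝ) (A : Finset (Fin n → Bool)) : ℝ :=
  ∑ ρ : Restriction n, restW α ρ * (if hitP A ρ then 1 else 0)

private def bslice {n : ℕ} (b : Bool) (A : Finset (Fin (n+1) → Bool)) : Finset (Fin n → Bool) :=
  Finset.univ.filter (fun y => Fin.cons b y ∈ A)

private lemma mem_bslice {n : ℕ} {b : Bool} {A : Finset (Fin (n+1) → Bool)} {y : Fin n → Bool} :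
    y ∈ bslice b A ↔ Fin.cons b y ∈ A := by simp [bslice]

private lemma restW_nonneg {n : ℕ} {α : ℝ} (h0 : 0 ≤ α) (h1 : α ≤ 1) (ρ : Restriction n) :
    0 ≤ restW α ρ := by
  apply Finset.prod_nonneg
  intro j _
  split
  · exact h0
  · linarith

private lemma QQ_nonneg {n : ℕ} {α : ℝ} (h0 : 0 ≤ α) (h1 : α ≤ 1) (A : Finset (Fin n → Bool)) :
    0 ≤ QQ n α A := by
  apply Finset.sum_nonneg
  intro ρ _
  apply mul_nonneg (restW_nonneg h0 h1 ρ)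
  split <;> norm_num

private lemma compatible_cons {n : ℕ} {o : Option Bool} {ρ : Restriction n} {b : Bool}
    {y : Fin n → Bool} :
    Compatible (Fin.cons o ρ) (Fin.cons b y) ↔
      (∀ b', o = some b' → b = b') ∧ Compatible ρ y := by
  constructor
  · intro h
    refine ⟨fun b' hb' => ?_, fun j b' hb' => ?_⟩
    · have := h 0 b' (by simpa using hb')
      simpa using this
    · have := h j.succ b' (by simpa using hb')
      simpa using this
  · rintro ⟨h0, h⟩ j b' hb'
    induction j using Fin.cases with
    | zero => simpa using h0 b' (by simpa using hb')
    | succ j => simpa using h j b' (by simpa using hb')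

private lemma hitP_cons_none {n : ℕ} {A : Finset (Fin (n+1) → Bool)} {ρ : Restriction n} :
    hitP A (Fin.cons none ρ) ↔ hitP (bslice false A) ρ ∨ hitP (bslice true A) ρ := by
  constructor
  · rintro ⟨x, hxA, hcomp⟩
    have hx : x = Fin.cons (x 0) (Fin.tail x) := (Fin.cons_self_tail x).symm
    rw [hx] at hxA hcomp
    rcases compatible_cons.1 hcomp with ⟨-, hcy⟩
    cases hb : x 0
    · exact Or.inl ⟨Fin.tail x, mem_bslice.2 (by rwa [hb] at hxA), hcy⟩
    · exact Or.inr ⟨Fin.tail x, mem_bslice.2 (by rwa [hb] at hxA), hcy⟩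
  · rintro (⟨y, hyA, hy⟩ | ⟨y, hyA, hy⟩)
    · exact ⟨Fin.cons false y, mem_bslice.1 hyA,
        compatible_cons.2 ⟨fun b' h => (nomatch h), hy⟩⟩
    · exact ⟨Fin.cons true y, mem_bslice.1 hyA,
        compatible_cons.2 ⟨fun b' h => (nomatch h), hy⟩⟩

private lemma hitP_cons_some {n : ℕ} {A : Finset (Fin (n+1) → Bool)} {ρ : Restriction n}
    {b : Bool} :
    hitP A (Fin.cons (some b) ρ) ↔ hitP (bslice b A) ρ := by
  constructor
  · rintro ⟨x, hxA, hcomp⟩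
    have hx : x = Fin.cons (x 0) (Fin.tail x) := (Fin.cons_self_tail x).symm
    rw [hx] at hxA hcomp
    rcases compatible_cons.1 hcomp with ⟨h0, hcy⟩
    have hb : x 0 = b := (h0 b rfl)
    rw [hb] at hxA
    exact ⟨Fin.tail x, mem_bslice.2 hxA, hcy⟩
  · rintro ⟨y, hyA, hy⟩
    exact ⟨Fin.cons b y, mem_bslice.1 hyA,
      compatible_cons.2 ⟨fun b' h => Option.some.inj h, hy⟩⟩

private lemma sum_restriction_succ {n : ℕ} (f : Restriction (n+1) → ℝ) :
    ∑ ρ : Restriction (n+1), f ρ =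
      ∑ o : Option Bool, ∑ ρ : Restriction n, f (Fin.cons o ρ) := by
  rw [← Equiv.sum_comp (Fin.consEquiv (fun _ => Option Bool)) f, Fintype.sum_prod_type]
  rfl

private lemma sum_cube_succ {n : ℕ} (f : (Fin (n+1) → Bool) → ℝ) :
    ∑ x : Fin (n+1) → Bool, f x = ∑ b : Bool, ∑ y : Fin n → Bool, f (Fin.cons b y) := by
  rw [← Equiv.sum_comp (Fin.consEquiv (fun _ => Bool)) f, Fintype.sum_prod_type]
  rfl

private lemma card_bslice {n : ℕ} (A : Finset (Fin (n+1) → Bool)) :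
    (A.card : ℝ) = (bslice false A).card + (bslice true A).card := by
  have key : ∀ (k : ℕ) (B : Finset (Fin k → Bool)),
      (B.card : ℝ) = ∑ y : Fin k → Bool, if y ∈ B then (1:ℝ) else 0 := by
    intro k B
    rw [Finset.sum_boole, Finset.filter_univ_mem]
  rw [key (n+1) A, sum_cube_succ, Fintype.sum_bool]
  have hb : ∀ b : Bool,
      (∑ y : Fin n → Bool, if Fin.cons b y ∈ A then (1:ℝ) else 0) = ((bslice b A).card : ℝ) := by
    intro b
    rw [key n (bslice b A)]
    apply Finset.sum_congr rfl
    intro y _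
    exact if_congr mem_bslice.symm rfl rfl
  rw [hb true, hb false]
  ring

private lemma restW_cons {n : ℕ} (α : ℝ) (o : Option Bool) (ρ : Restriction n) :
    restW α (Fin.cons o ρ) = (if o = none then α else (1 - α) / 2) * restW α ρ := by
  rw [restW, restW, Fin.prod_univ_succ]
  simp only [Fin.cons_zero, Fin.cons_succ]

private lemma ite_le_ite_of_imp {P Q : Prop} [Decidable P] [Decidable Q] (h : P → Q) :
    (if P then (1:ℝ) else 0) ≤ (if Q then 1 else 0) := by
  by_cases hP : P
  · rw [if_pos hP, if_pos (h hP)]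
  · rw [if_neg hP]
    split <;> norm_num

private lemma QQ_succ {n : ℕ} (α : ℝ) (A : Finset (Fin (n+1) → Bool)) :
    QQ (n+1) α A =
      α * (∑ ρ : Restriction n, restW α ρ *
          (if hitP (bslice false A) ρ ∨ hitP (bslice true A) ρ then 1 else 0)) +
        ((1 - α) / 2 * QQ n α (bslice false A) + (1 - α) / 2 * QQ n α (bslice true A)) := by
  rw [QQ, sum_restriction_succ (fun ρ => restW α ρ * (if hitP A ρ then 1 else 0)),
    Fintype.sum_option]
  congr 1
  · rw [Finset.mul_sum]
    apply Finset.sum_congr rfl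
    intro ρ _
    rw [restW_cons, if_pos rfl]
    simp only [hitP_cons_none]
    ring
  · have hb : ∀ b : Bool,
        (∑ ρ : Restriction n, restW α (Fin.cons (some b) ρ) *
          (if hitP A (Fin.cons (some b) ρ) then 1 else 0)) =
          (1 - α) / 2 * QQ n α (bslice b A) := by
      intro b
      rw [QQ, Finset.mul_sum]
      apply Finset.sum_congr rfl
      intro ρ _
      rw [restW_cons, if_neg (by simp)]
      simp only [hitP_cons_some]
      ring
    rw [Fintype.sum_bool, hb true, hb false]
    ring

private lemma dens_rpow_le_QQ {α : ℝ} (hα0 : 0 ≤ α) (hα1 : α < 1) :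
    ∀ (n : ℕ) (A : Finset (Fin n → Bool)),
      ((A.card : ℝ) / 2 ^ n) ^ (2 * (1 - α) / (2 - α)) ≤ QQ n α A := by
  have h2α : (0:ℝ) < 2 - α := by linarith
  have hc0 : 0 < 2 * (1 - α) / (2 - α) := div_pos (by linarith) h2α
  intro n
  induction n with
  | zero =>
    intro A
    rcases Finset.eq_empty_or_nonempty A with rfl | ⟨x, hx⟩
    · rw [show ((Finset.card (∅ : Finset (Fin 0 → Bool)) : ℝ) / 2 ^ 0) = 0 by simp,
        Real.zero_rpow hc0.ne']
      exact QQ_nonneg hα0 hα1.le ∅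
    · have hcard : (A.card : ℝ) / 2 ^ 0 ≤ 1 := by
        have h1 := Finset.card_le_univ A
        have h2 : Fintype.card (Fin 0 → Bool) = 1 := by simp
        rw [h2] at h1
        simp only [pow_zero, div_one]
        exact_mod_cast h1
      have hLHS : ((A.card : ℝ) / 2 ^ 0) ^ (2 * (1 - α) / (2 - α)) ≤ 1 :=
        Real.rpow_le_one (by positivity) hcard hc0.le
      have hQQ : QQ 0 α A = 1 := by
        rw [QQ]
        have hterm : ∀ ρ : Restriction 0,
            restW α ρ * (if hitP A ρ then 1 else 0) = 1 := by
          intro ρ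
          have h1 : restW α ρ = 1 := by
            rw [restW]; exact Finset.prod_of_isEmpty _
          have h2 : hitP A ρ := ⟨x, hx, fun j b h => j.elim0⟩
          rw [h1, if_pos h2, one_mul]
        rw [Finset.sum_congr rfl (fun ρ _ => hterm ρ), Finset.sum_const]
        simp
      rw [hQQ]
      exact hLHS
  | succ n ih =>
    intro A
    have hdens : (A.card : ℝ) / 2 ^ (n+1) =
        (((bslice false A).card : ℝ) / 2 ^ n + ((bslice true A).card : ℝ) / 2 ^ n) / 2 := by
      rw [card_bslice A]
      ring
    set H := ∑ ρ : Restriction n, restW α ρ *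
        (if hitP (bslice false A) ρ ∨ hitP (bslice true A) ρ then 1 else 0) with hHdef
    have hH0 : QQ n α (bslice false A) ≤ H :=
      Finset.sum_le_sum fun ρ _ =>
        mul_le_mul_of_nonneg_left (ite_le_ite_of_imp Or.inl) (restW_nonneg hα0 hα1.le ρ)
    have hH1 : QQ n α (bslice true A) ≤ H :=
      Finset.sum_le_sum fun ρ _ =>
        mul_le_mul_of_nonneg_left (ite_le_ite_of_imp Or.inr) (restW_nonneg hα0 hα1.le ρ)
    have i0 := ih (bslice false A)
    have i1 := ih (bslice true A)
    rw [QQ_succ, hdens, ← hHdef]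
    rcases le_total (((bslice false A).card : ℝ) / 2 ^ n) (((bslice true A).card : ℝ) / 2 ^ n)
      with hle | hle
    · calc ((((bslice false A).card : ℝ) / 2 ^ n + ((bslice true A).card : ℝ) / 2 ^ n) / 2) ^
            (2 * (1 - α) / (2 - α)) ≤
          α * (((bslice true A).card : ℝ) / 2 ^ n) ^ (2 * (1 - α) / (2 - α)) +
            (1 - α) / 2 * ((((bslice false A).card : ℝ) / 2 ^ n) ^ (2 * (1 - α) / (2 - α)) +
              (((bslice true A).card : ℝ) / 2 ^ n) ^ (2 * (1 - α) / (2 - α))) :=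
            key_scalar hα0 hα1 (by positivity) hle
        _ ≤ α * H + ((1 - α) / 2 * QQ n α (bslice false A) +
              (1 - α) / 2 * QQ n α (bslice true A)) := by
            have hsH : (((bslice true A).card : ℝ) / 2 ^ n) ^ (2 * (1 - α) / (2 - α)) ≤ H :=
              le_trans i1 hH1
            nlinarith [mul_le_mul_of_nonneg_left hsH hα0,
              mul_le_mul_of_nonneg_left i0 (by linarith : (0:ℝ) ≤ (1 - α) / 2),
              mul_le_mul_of_nonneg_left i1 (by linarith : (0:ℝ) ≤ (1 - α) / 2)]
    · calc ((((bslice false A).card : ℝ) / 2 ^ n + ((bslice true A).card : ℝ) / 2 ^ n) / 2) ^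
            (2 * (1 - α) / (2 - α)) =
          ((((bslice true A).card : ℝ) / 2 ^ n + ((bslice false A).card : ℝ) / 2 ^ n) / 2) ^
            (2 * (1 - α) / (2 - α)) := by rw [add_comm]
        _ ≤ α * (((bslice false A).card : ℝ) / 2 ^ n) ^ (2 * (1 - α) / (2 - α)) +
            (1 - α) / 2 * ((((bslice true A).card : ℝ) / 2 ^ n) ^ (2 * (1 - α) / (2 - α)) +
              (((bslice false A).card : ℝ) / 2 ^ n) ^ (2 * (1 - α) / (2 - α))) :=
            key_scalar hα0 hα1 (by positivity) hle
        _ ≤ α * H + ((1 - α) / 2 * QQ n α (bslice false A) +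
              (1 - α) / 2 * QQ n α (bslice true A)) := by
            have hsH : (((bslice false A).card : ℝ) / 2 ^ n) ^ (2 * (1 - α) / (2 - α)) ≤ H :=
              le_trans i0 hH0
            nlinarith [mul_le_mul_of_nonneg_left hsH hα0,
              mul_le_mul_of_nonneg_left i0 (by linarith : (0:ℝ) ≤ (1 - α) / 2),
              mul_le_mul_of_nonneg_left i1 (by linarith : (0:ℝ) ≤ (1 - α) / 2)]

theorem pL_le_qL_pow {n m w : ℕ} (C : Fin m → Term n)
    (hw : ∀ j, termWidth (C j) ≤ w)
    (hm : 0 < m) (hlast : C ⟨m - 1, Nat.sub_lt hm one_pos⟩ = fun _ => none)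
    (huseful : ∀ i : Fin m, ∃ x, DLind C x = i.val)
    (i : Fin m) (β : ℝ) (hβ0 : 0 < β) (hβ1 : β < 1) :
    pL C i.val ≤ qL C (1 - β) i ^ ((1 + β) / (2 * β)) := by
  classical
  have h1β : (0:ℝ) < 1 + β := by linarith
  have hA : pL C i.val =
      ((Finset.univ.filter fun x : Fin n → Bool => DLind C x = i.val).card : ℝ) / 2 ^ n := by
    rw [pL, pr]
    congr!
  set A : Finset (Fin n → Bool) := Finset.univ.filter (fun x => DLind C x = i.val) with hAdef
  have hq : qL C (1 - β) i = QQ n (1 - β) A := by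
    rw [qL, QQ]
    apply Finset.sum_congr rfl
    intro ρ _
    congr 1
    apply if_congr _ rfl rfl
    constructor
    · rintro ⟨x, hc, hi⟩
      exact ⟨x, by simp [hAdef, hi], hc⟩
    · rintro ⟨x, hxA, hc⟩
      refine ⟨x, hc, ?_⟩
      have := hxA
      rw [hAdef] at this
      simpa using this
  have hmain := dens_rpow_le_QQ (α := 1 - β) (by linarith) (by linarith) n A
  have hcexp : 2 * (1 - (1 - β)) / (2 - (1 - β)) = 2 * β / (1 + β) := by
    rw [show (1:ℝ) - (1 - β) = β by ring, show (2:ℝ) - (1 - β) = 1 + β by ring]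
  rw [hcexp, ← hq] at hmain
  rw [hA]
  have hppos : (0:ℝ) ≤ (A.card : ℝ) / 2 ^ n := by positivity
  have hexp1 : (2 * β / (1 + β)) * ((1 + β) / (2 * β)) = 1 := by
    field_simp
  have h1 : (A.card : ℝ) / 2 ^ n =
      (((A.card : ℝ) / 2 ^ n) ^ (2 * β / (1 + β))) ^ ((1 + β) / (2 * β)) := by
    rw [← Real.rpow_mul hppos, hexp1, Real.rpow_one]
  rw [h1]
  exact Real.rpow_le_rpow (Real.rpow_nonneg hppos _) hmain (by positivity)
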